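/- Let N ≥ 2, r ∈ (0,1) with |p-r| < 1 and p = 1-(N-1)r, and let a_j = (N-1)/(Nr) + (p-r)^{j+1}/(Nr) - (1-r)^{j+1}/r. Then a_j converges to (N-1)/(Nr) as j → ∞, and for all i, j ≥ 0, Σ_{k=0}^{∞} |a_{i+k} - a_k| ≤ (1-r)/r² + |p-r|/(1-|p-r|)². -/

import Mathlib

theorem stmt_10 (N : ℕ) (hN : 2 ≤ N) (r p : ℝ)
    (hr : 0 < r) (hr1 : r < 1)
    (hp : p = 1 - ((N : ℝ) - 1) * r)
    (hpr : |p - r| < 1)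
    (a : ℕ → ℝ)
    (ha : ∀ j, a j = ((N : ℝ) - 1) / ((N : ℝ) * r) + (p - r) ^ (j + 1) / ((N : ℝ) * r)
      - (1 - r) ^ (j + 1) / r) :
    Filter.Tendsto a Filter.atTop (nhds (((N : ℝ) - 1) / ((N : ℝ) * r))) ∧
    ∀ i : ℕ, ∑' k : ℕ, |a (i + k) - a k| ≤ (1 - r) / r ^ 2 + |p - r| / (1 - |p - r|) ^ 2 := by
  set x := p - r with hxdef
  have hN2 : (2 : ℝ) ≤ (N : ℝ) := by exact_mod_cast hN
  have hNr : (N : ℝ) * r = 1 - x := by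
    have h : ((N : ℝ) - 1) * r = (N : ℝ) * r - r := by ring
    rw [hxdef, hp]; linarith
  have hNrpos : 0 < (N : ℝ) * r := by nlinarith
  have hxa : 0 ≤ |x| := abs_nonneg x
  have hx1 : 0 < 1 - |x| := by linarith
  have hxle : x ≤ |x| := le_abs_self x
  have h1x : 0 < 1 - x := by linarith
  have hy0 : (0 : ℝ) ≤ 1 - r := by linarith
  have hy1 : 1 - r < 1 := by linarith
  constructor
  · -- convergence
    have hxt : Filter.Tendsto (fun j : ℕ => x ^ (j + 1) / ((N : ℝ) * r))
        Filter.atTop (nhds 0) := by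
      have h0 := tendsto_pow_atTop_nhds_zero_of_abs_lt_one hpr
      have := (h0.comp (Filter.tendsto_add_atTop_nat 1)).div_const ((N : ℝ) * r)
      simpa using this
    have hay1 : |1 - r| < 1 := by rw [abs_of_nonneg hy0]; linarith
    have hyt : Filter.Tendsto (fun j : ℕ => (1 - r) ^ (j + 1) / r)
        Filter.atTop (nhds 0) := by
      have h0 := tendsto_pow_atTop_nhds_zero_of_abs_lt_one hay1
      have := (h0.comp (Filter.tendsto_add_atTop_nat 1)).div_const r
      simpa using this
    have hfun : a = fun j => ((N : ℝ) - 1) / ((N : ℝ) * r) + x ^ (j + 1) / ((N : ℝ) * r)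
        - (1 - r) ^ (j + 1) / r := funext ha
    rw [hfun]
    simpa using (tendsto_const_nhds.add hxt).sub hyt
  · intro i
    set g : ℕ → ℝ := fun k => ((1 - r) / r) * (1 - r) ^ k + (|x| / (1 - |x|)) * |x| ^ k
      with hgdef
    have hgsum1 : Summable (fun k : ℕ => ((1 - r) / r) * (1 - r) ^ k) :=
      (summable_geometric_of_lt_one hy0 hy1).mul_left _
    have hgsum2 : Summable (fun k : ℕ => (|x| / (1 - |x|)) * |x| ^ k) :=
      (summable_geometric_of_lt_one hxa hpr).mul_left _
    have hgsum : Summable g := hgsum1.add hgsum2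
    -- |x^i - 1| * (1 - |x|) ≤ 1 - x
    have hxi : |x ^ i - 1| * (1 - |x|) ≤ 1 - x := by
      have hgeom : x ^ i - 1 = (∑ j ∈ Finset.range i, x ^ j) * (x - 1) := by
        rw [geom_sum_mul]
      have hS : |∑ j ∈ Finset.range i, x ^ j| ≤ ∑ j ∈ Finset.range i, |x| ^ j := by
        calc |∑ j ∈ Finset.range i, x ^ j| ≤ ∑ j ∈ Finset.range i, |x ^ j| :=
              Finset.abs_sum_le_sum_abs _ _
          _ = ∑ j ∈ Finset.range i, |x| ^ j := by simp [abs_pow]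
      have hS2 : (∑ j ∈ Finset.range i, |x| ^ j) * (|x| - 1) = |x| ^ i - 1 :=
        geom_sum_mul (|x|) i
      have hSnn : 0 ≤ ∑ j ∈ Finset.range i, |x| ^ j :=
        Finset.sum_nonneg fun j _ => pow_nonneg hxa j
      have h1 : |x ^ i - 1| ≤ (∑ j ∈ Finset.range i, |x| ^ j) * (1 - x) := by
        rw [hgeom, abs_mul]
        have : |x - 1| = 1 - x := by rw [abs_of_nonpos (by linarith)]; ring
        rw [this]
        exact mul_le_mul_of_nonneg_right hS (by linarith)
      nlinarith [pow_nonneg hxa i]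
    have hbound : ∀ k : ℕ, |a (i + k) - a k| ≤ g k := by
      intro k
      have hrw : a (i + k) - a k = (x ^ (i + k + 1) - x ^ (k + 1)) / ((N : ℝ) * r)
          - ((1 - r) ^ (i + k + 1) - (1 - r) ^ (k + 1)) / r := by
        rw [ha, ha]; ring
      have hA : x ^ (i + k + 1) - x ^ (k + 1) = x ^ (k + 1) * (x ^ i - 1) := by
        rw [show i + k + 1 = (k + 1) + i from by ring, pow_add]; ring
      have hB : (1 - r) ^ (i + k + 1) - (1 - r) ^ (k + 1)
          = (1 - r) ^ (k + 1) * ((1 - r) ^ i - 1) := by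
        rw [show i + k + 1 = (k + 1) + i from by ring, pow_add]; ring
      have t1 : |(x ^ (i + k + 1) - x ^ (k + 1)) / ((N : ℝ) * r)|
          ≤ (|x| / (1 - |x|)) * |x| ^ k := by
        rw [hA, abs_div, abs_mul, abs_pow, abs_of_pos hNrpos, hNr,
          div_le_iff₀ h1x, div_mul_eq_mul_div, div_mul_eq_mul_div,
          le_div_iff₀ hx1, ← pow_succ']
        calc |x| ^ (k + 1) * |x ^ i - 1| * (1 - |x|)
            = |x| ^ (k + 1) * (|x ^ i - 1| * (1 - |x|)) := by ring
          _ ≤ |x| ^ (k + 1) * (1 - x) := mul_le_mul_of_nonneg_left hxi (pow_nonneg hxa _)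
      have t2 : |((1 - r) ^ (i + k + 1) - (1 - r) ^ (k + 1)) / r|
          ≤ ((1 - r) / r) * (1 - r) ^ k := by
        rw [hB, abs_div, abs_mul, abs_pow, abs_of_pos hr, abs_of_nonneg hy0]
        have hyi : |(1 - r) ^ i - 1| ≤ 1 := by
          rw [abs_le]
          constructor
          · have := pow_nonneg hy0 i; linarith
          · have := pow_le_one₀ hy0 (le_of_lt hy1) (n := i); linarith
        have hp1 : (0 : ℝ) ≤ (1 - r) ^ (k + 1) := pow_nonneg hy0 _
        have : (1 - r) ^ (k + 1) * |(1 - r) ^ i - 1| ≤ (1 - r) ^ (k + 1) := by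
          nlinarith
        rw [div_le_iff₀ hr]
        calc (1 - r) ^ (k + 1) * |(1 - r) ^ i - 1| ≤ (1 - r) ^ (k + 1) := this
          _ = (1 - r) / r * (1 - r) ^ k * r := by rw [pow_succ]; field_simp
      calc |a (i + k) - a k| ≤ |(x ^ (i + k + 1) - x ^ (k + 1)) / ((N : ℝ) * r)|
            + |((1 - r) ^ (i + k + 1) - (1 - r) ^ (k + 1)) / r| := by
              rw [hrw]; exact abs_sub _ _
        _ ≤ g k := by rw [hgdef]; dsimp only; linarith
    have hfsum : Summable (fun k : ℕ => |a (i + k) - a k|) :=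
      Summable.of_nonneg_of_le (fun k => abs_nonneg _) hbound hgsum
    calc ∑' k : ℕ, |a (i + k) - a k| ≤ ∑' k : ℕ, g k := Summable.tsum_le_tsum hbound hfsum hgsum
      _ = (1 - r) / r ^ 2 + |x| / (1 - |x|) ^ 2 := by
        rw [hgdef, Summable.tsum_add hgsum1 hgsum2, tsum_mul_left, tsum_mul_left,
          tsum_geometric_of_lt_one hy0 hy1, tsum_geometric_of_lt_one hxa hpr]
        have hr' : r ≠ 0 := ne_of_gt hr
        have hx' : (1 - |x|) ≠ 0 := ne_of_gt hx1
        rw [sub_sub_cancel]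
        field_simp
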